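/- The average eccentricity of the Fibonacci cube Γ_n, divided by n, converges to (5+√5)/10 as n → ∞. -/

import Mathlib

open Finset

/-- Number of positions where two binary strings differ. -/
def diffCount {n : ℕ} (u v : Fin n → Bool) : ℕ :=
  (Finset.univ.filter fun i => u i ≠ v i).card

/-- Fibonacci strings: binary strings with no two consecutive 1's. -/
def FibPred (n : ℕ) (v : Fin n → Bool) : Prop :=
  ∀ i j : Fin n, (j : ℕ) = (i : ℕ) + 1 → ¬(v i = true ∧ v j = true)

instance (n : ℕ) : DecidablePred (FibPred n) := fun v => by
  unfold FibPred; infer_instance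

/-- Vertices of the Fibonacci cube: Fibonacci strings of length n. -/
def FibV (n : ℕ) := {v : Fin n → Bool // FibPred n v}

instance (n : ℕ) : Fintype (FibV n) := Subtype.fintype _
instance (n : ℕ) : DecidableEq (FibV n) := Subtype.instDecidableEq

/-- The Fibonacci cube Γ_n: Fibonacci strings adjacent iff they differ in exactly one position. -/
def fibCube (n : ℕ) : SimpleGraph (FibV n) where
  Adj u v := diffCount u.1 v.1 = 1
  symm := by
    constructor; intro u v h
    have he : (Finset.univ.filter fun i => v.1 i ≠ u.1 i)
        = (Finset.univ.filter fun i => u.1 i ≠ v.1 i) := by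
      apply Finset.filter_congr; intro i _; exact ne_comm
    simpa [diffCount, he] using h
  loopless := by constructor; intro u h; simp [diffCount] at h

instance (n : ℕ) : DecidableRel (fibCube n).Adj := fun u v => Nat.decEq _ _

/-- Eccentricity of a vertex in a finite graph: the maximum distance to any vertex. -/
noncomputable def gecc {V : Type*} [Fintype V] (G : SimpleGraph V) (u : V) : ℕ :=
  Finset.univ.sup (G.dist u)

section PartA

variable {n : ℕ}

lemma diffCount_eq_zero {u v : Fin n → Bool} (h : diffCount u v = 0) : u = v := by
  funext i
  by_contra hi
  have : i ∈ Finset.univ.filter fun j => u j ≠ v j := by simp [hi]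
  rw [diffCount, Finset.card_eq_zero] at h
  simp [h] at this

lemma diffCount_triangle (u v w : Fin n → Bool) :
    diffCount u w ≤ diffCount u v + diffCount v w := by
  unfold diffCount
  refine le_trans (Finset.card_le_card ?_) (Finset.card_union_le _ _)
  intro i hi
  simp only [Finset.mem_filter, Finset.mem_union, Finset.mem_univ, true_and] at *
  by_contra hc
  push_neg at hc
  exact hi (hc.1.trans hc.2)

lemma diffCount_le_of_walk {u v : FibV n} (p : (fibCube n).Walk u v) :
    diffCount u.1 v.1 ≤ p.length := by
  induction p with
  | nil => simp [diffCount]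
  | @cons a b c h q ih =>
    refine le_trans (diffCount_triangle a.1 b.1 c.1) ?_
    rw [SimpleGraph.Walk.length_cons]
    have hab : diffCount a.1 b.1 = 1 := h
    omega

lemma fibPred_mono {u v : Fin n → Bool} (hv : FibPred n v)
    (h : ∀ j, u j = true → v j = true) : FibPred n u := by
  intro i j hij ⟨h1, h2⟩
  exact hv i j hij ⟨h i h1, h j h2⟩

lemma diffCount_update {u v : Fin n → Bool} {i : Fin n} (hi : u i ≠ v i) :
    diffCount (Function.update u i (v i)) v = diffCount u v - 1 ∧
      diffCount u (Function.update u i (v i)) = 1 := by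
  constructor
  · have he : (Finset.univ.filter fun j => Function.update u i (v i) j ≠ v j)
        = (Finset.univ.filter fun j => u j ≠ v j).erase i := by
      ext j
      simp only [Finset.mem_filter, Finset.mem_erase, Finset.mem_univ, true_and]
      rcases eq_or_ne j i with rfl | hj
      · simp [Function.update_self]
      · simp [Function.update_of_ne hj, hj]
    rw [diffCount, diffCount, he, Finset.card_erase_of_mem (by simp [hi])]
  · have he : (Finset.univ.filter fun j => u j ≠ Function.update u i (v i) j) = {i} := by
      ext j
      simp only [Finset.mem_filter, Finset.mem_univ, true_and, Finset.mem_singleton]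
      rcases eq_or_ne j i with rfl | hj
      · simp [Function.update_self, hi]
      · simp [Function.update_of_ne hj, hj]
    rw [diffCount, he, Finset.card_singleton]

lemma exists_walk (k : ℕ) : ∀ (u v : FibV n), diffCount u.1 v.1 = k →
    ∃ p : (fibCube n).Walk u v, p.length = k := by
  induction k with
  | zero =>
    intro u v h
    have : u = v := Subtype.ext (diffCount_eq_zero h)
    subst this
    exact ⟨SimpleGraph.Walk.nil, rfl⟩
  | succ k ih =>
    intro u v h
    have hne : (Finset.univ.filter fun j => u.1 j ≠ v.1 j).Nonempty := by
      rw [← Finset.card_pos, ← diffCount, h]; omega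
    by_cases hcase : ∃ i, u.1 i ≠ v.1 i ∧ u.1 i = true
    · obtain ⟨i, hi, hit⟩ := hcase
      set u' : Fin n → Bool := Function.update u.1 i (v.1 i) with hu'
      have hfib : FibPred n u' := by
        refine fibPred_mono u.2 ?_
        intro j hj
        rcases eq_or_ne j i with rfl | hji
        · exact hit
        · rwa [hu', Function.update_of_ne hji] at hj
      obtain ⟨hd1, hd2⟩ := diffCount_update hi
      have hadj : (fibCube n).Adj u ⟨u', hfib⟩ := hd2
      obtain ⟨p, hp⟩ := ih ⟨u', hfib⟩ v (by rw [hd1, h]; omega)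
      exact ⟨SimpleGraph.Walk.cons hadj p, congrArg (· + 1) hp⟩
    · push_neg at hcase
      obtain ⟨i, hi⟩ := hne
      simp only [Finset.mem_filter, Finset.mem_univ, true_and] at hi
      set u' : Fin n → Bool := Function.update u.1 i (v.1 i) with hu'
      have hle : ∀ j, u.1 j = true → v.1 j = true := by
        intro j hj
        by_contra hv
        exact hcase j (by rw [hj]; exact fun e => hv e.symm) hj
      have hfib : FibPred n u' := by
        refine fibPred_mono v.2 ?_
        intro j hj
        rcases eq_or_ne j i with rfl | hji
        · rwa [hu', Function.update_self] at hj
        · rw [hu', Function.update_of_ne hji] at hj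
          exact hle j hj
      obtain ⟨hd1, hd2⟩ := diffCount_update hi
      have hadj : (fibCube n).Adj u ⟨u', hfib⟩ := hd2
      obtain ⟨p, hp⟩ := ih ⟨u', hfib⟩ v (by rw [hd1, h]; omega)
      exact ⟨SimpleGraph.Walk.cons hadj p, congrArg (· + 1) hp⟩

lemma fibCube_dist (u v : FibV n) : (fibCube n).dist u v = diffCount u.1 v.1 := by
  obtain ⟨p, hp⟩ := exists_walk (diffCount u.1 v.1) u v rfl
  refine le_antisymm (hp ▸ SimpleGraph.dist_le p) ?_
  obtain ⟨q, hq⟩ := SimpleGraph.Reachable.exists_walk_length_eq_dist ⟨p⟩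
  calc diffCount u.1 v.1 ≤ q.length := diffCount_le_of_walk q
  _ = _ := hq

end PartA
section PartB

/-- Left-to-right scan: `wseq u i = true` iff the zero-run of `u` ending at `i`
has odd length (and `u i = false`). -/
def wseq (u : ℕ → Bool) : ℕ → Bool
  | 0 => !u 0
  | (i+1) => !u (i+1) && (u i || !wseq u i)

/-- Extension of a finite binary string to `ℕ` by `false`. -/
def extB {n : ℕ} (u : Fin n → Bool) : ℕ → Bool := fun i => if h : i < n then u ⟨i, h⟩ else false

variable {n : ℕ}

lemma extB_lt (u : Fin n → Bool) (i : Fin n) : extB u i.1 = u i := by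
  simp [extB, i.2]

lemma wseq_false_of_true {u : ℕ → Bool} {i : ℕ} (h : wseq u i = true) : u i = false := by
  cases i with
  | zero => simpa [wseq] using h
  | succ k =>
    simp only [wseq, Bool.and_eq_true, Bool.not_eq_true'] at h
    exact h.1

lemma wseq_congr {u v : ℕ → Bool} : ∀ i, (∀ j ≤ i, u j = v j) → wseq u i = wseq v i := by
  intro i
  induction i with
  | zero => intro h; simp [wseq, h 0 le_rfl]
  | succ i ih =>
    intro h
    simp only [wseq]
    rw [h (i+1) le_rfl, h i (by omega), ih (fun j hj => h j (by omega))]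

/-- The set of second elements of greedily-matched 00-pairs. -/
def mset (u : Fin n → Bool) : Finset (Fin n) :=
  Finset.univ.filter fun i =>
    0 < i.1 ∧ u i = false ∧ extB u (i.1-1) = false ∧ wseq (extB u) (i.1-1) = true

def mfun (u : Fin n → Bool) : ℕ := (mset u).card

/-- The farthest vertex from `u`. -/
def vstar (u : Fin n → Bool) : Fin n → Bool := fun i => wseq (extB u) i.1

lemma vstar_fib (u : Fin n → Bool) : FibPred n (vstar u) := by
  intro i j hij ⟨h1, h2⟩
  unfold vstar at h1 h2
  rw [hij] at h2
  simp only [wseq, Bool.and_eq_true, Bool.or_eq_true] at h2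
  rcases h2.2 with h | h
  · rw [wseq_false_of_true h1] at h; exact Bool.false_ne_true h
  · rw [h1] at h; simp at h

lemma agree_iff (u : Fin n → Bool) (i : Fin n) :
    u i = vstar u i ↔ i ∈ mset u := by
  unfold vstar mset
  simp only [Finset.mem_filter, Finset.mem_univ, true_and]
  cases hi : u i with
  | true =>
    constructor
    · intro h
      have h2 := wseq_false_of_true h.symm
      rw [extB_lt, hi] at h2
      exact absurd h2 (by simp)
    · rintro ⟨-, h, -⟩; exact absurd h (by simp)
  | false =>
    rcases Nat.eq_zero_or_pos i.1 with h0 | h0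
    · constructor
      · intro h
        exfalso
        rw [h0] at h
        simp only [wseq] at h
        rw [show (0:ℕ) = (i:ℕ) from h0.symm, extB_lt, hi] at h
        simp at h
      · rintro ⟨h, -⟩; omega
    · obtain ⟨j, hj⟩ : ∃ j, i.1 = j + 1 := ⟨i.1 - 1, by omega⟩
      rw [hj]
      simp only [wseq]
      rw [show j + 1 = i.1 from hj.symm, extB_lt, hi]
      constructor
      · intro h
        have h' : (extB u j || !wseq (extB u) j) = false := by
          cases hh : (extB u j || !wseq (extB u) j) <;> simp [hh] at h ⊢
        simp only [Bool.or_eq_false_iff, Bool.not_eq_false'] at h'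
        exact ⟨h0, trivial, by rw [hj]; simpa using h'.1, by rw [hj]; simpa using h'.2⟩
      · rintro ⟨-, -, h1, h2⟩
        rw [hj] at h1 h2
        simp only [Nat.add_sub_cancel] at h1 h2
        rw [h1, h2]
        rfl

lemma diffCount_vstar (u : Fin n → Bool) : diffCount u (vstar u) + mfun u = n := by
  classical
  have h1 : mset u = Finset.univ.filter fun i => ¬ (u i ≠ vstar u i) := by
    ext i
    simp only [Finset.mem_filter, Finset.mem_univ, true_and, not_not]
    exact (agree_iff u i).symm
  have h2 := Finset.card_filter_add_card_filter_not
    (s := (Finset.univ : Finset (Fin n))) (p := fun i => u i ≠ vstar u i)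
  rw [diffCount, mfun, h1]
  simpa using h2

lemma mset_not_adjacent {u : Fin n → Bool} {i j : Fin n}
    (hi : i ∈ mset u) (hj : j ∈ mset u) (hij : j.1 = i.1 + 1) : False := by
  simp only [mset, Finset.mem_filter, Finset.mem_univ, true_and] at hi hj
  obtain ⟨hi0, hiu, hip, hiw⟩ := hi
  obtain ⟨hj0, hju, hjp, hjw⟩ := hj
  rw [hij, Nat.add_sub_cancel] at hjw
  obtain ⟨k, hk⟩ : ∃ k, i.1 = k + 1 := ⟨i.1 - 1, by omega⟩
  rw [hk] at hjw
  simp only [wseq, Bool.and_eq_true, Bool.or_eq_true] at hjw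
  rcases hjw.2 with h | h
  · rw [show k = i.1 - 1 by omega, hip] at h; exact Bool.false_ne_true h
  · rw [show k = i.1 - 1 by omega, hiw] at h; simp at h

lemma mem_mset_pos {u : Fin n → Bool} {i : Fin n} (hi : i ∈ mset u) : 0 < i.1 := by
  simp only [mset, Finset.mem_filter, Finset.mem_univ, true_and] at hi
  exact hi.1

lemma mfun_le_agree {u v : Fin n → Bool} (hv : FibPred n v) :
    diffCount u v + mfun u ≤ n := by
  classical
  have hsum := Finset.card_filter_add_card_filter_not
    (s := (Finset.univ : Finset (Fin n))) (p := fun i => u i ≠ v i)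
  simp only [Finset.card_univ, Fintype.card_fin] at hsum
  set agree := Finset.univ.filter fun i => ¬ u i ≠ v i with hagree
  have hkey : mfun u ≤ agree.card := by
    set pi : Fin n → Fin n := fun i => ⟨i.1 - 1, lt_of_le_of_lt (Nat.sub_le _ _) i.2⟩ with hpi
    set f : Fin n → Fin n := fun i => if v (pi i) = u (pi i) then pi i else i with hf
    apply Finset.card_le_card_of_injOn f
    · intro i hi
      have hi0 := mem_mset_pos hi
      simp only [Finset.mem_coe, mset, Finset.mem_filter, Finset.mem_univ, true_and] at hi
      obtain ⟨h0, hu, hp, hw⟩ := hi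
      have hup : u (pi i) = false := by rw [← extB_lt u (pi i)]; exact hp
      simp only [Finset.mem_coe, hagree, Finset.mem_filter, Finset.mem_univ, true_and, not_not, hf]
      by_cases hcase : v (pi i) = u (pi i)
      · rw [if_pos hcase]; exact hcase.symm
      · rw [if_neg hcase]
        have hvp : v (pi i) = true := by
          cases hh : v (pi i)
          · rw [hup] at hcase; exact absurd hh hcase
          · rfl
        have hadj := hv (pi i) i (by simp only [hpi]; omega)
        rw [hu]
        cases hh : v i
        · rfl
        · exact absurd ⟨hvp, hh⟩ hadj
    · intro i hi j hj hij
      have hi' : i ∈ mset u := Finset.mem_coe.mp hi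
      have hj' : j ∈ mset u := Finset.mem_coe.mp hj
      have hi0 := mem_mset_pos hi'
      have hj0 := mem_mset_pos hj'
      simp only [hf] at hij
      by_cases ci : v (pi i) = u (pi i) <;> by_cases cj : v (pi j) = u (pi j) <;>
        simp only [ci, cj, if_pos, if_neg, if_true, if_false] at hij
      · have : i.1 - 1 = j.1 - 1 := congrArg Fin.val hij
        exact Fin.ext (by omega)
      · exfalso
        have : (i.1 - 1 : ℕ) = j.1 := congrArg Fin.val hij
        exact mset_not_adjacent hj' hi' (by omega)
      · exfalso
        have : (i.1 : ℕ) = j.1 - 1 := congrArg Fin.val hij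
        exact mset_not_adjacent hi' hj' (by omega)
      · exact hij
  have hdc : diffCount u v = (Finset.univ.filter fun i => u i ≠ v i).card := rfl
  omega

lemma gecc_add_mfun (u : FibV n) : gecc (fibCube n) u + mfun u.1 = n := by
  have hstar : (fibCube n).dist u ⟨vstar u.1, vstar_fib u.1⟩ + mfun u.1 = n := by
    exact (congrArg (· + mfun u.1) (fibCube_dist u _)).trans (diffCount_vstar u.1)
  have hub : ∀ v : FibV n, (fibCube n).dist u v + mfun u.1 ≤ n := by
    intro v
    have h1 := fibCube_dist u v
    have h2 := mfun_le_agree (u := u.1) v.2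
    omega
  have h1 : gecc (fibCube n) u ≤ n - mfun u.1 := by
    apply Finset.sup_le
    intro v _
    have := hub v
    omega
  have h2 : n - mfun u.1 ≤ gecc (fibCube n) u :=
    le_trans (le_of_eq (by omega))
      (Finset.le_sup (f := (fibCube n).dist u)
        (Finset.mem_univ (⟨vstar u.1, vstar_fib u.1⟩ : FibV n)))
  have hle : mfun u.1 ≤ n := by have := hub u; omega
  omega

end PartB
section PartC

variable {N n : ℕ}

/-- Append a bit to a binary string. -/
def appd (u : Fin N → Bool) (b : Bool) : Fin (N+1) → Bool :=
  fun i => if h : i.1 < N then u ⟨i.1, h⟩ else b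

/-- Restriction dropping the last bit. -/
def restr (v : Fin (N+1) → Bool) : Fin N → Bool :=
  fun i => v ⟨i.1, by omega⟩

lemma appd_lt (u : Fin N → Bool) (b : Bool) (i : Fin (N+1)) (h : i.1 < N) :
    appd u b i = u ⟨i.1, h⟩ := dif_pos h

lemma appd_last (u : Fin N → Bool) (b : Bool) : appd u b (Fin.last N) = b := by
  simp [appd]

/-- The append equivalence. -/
def appdEquiv : ((Fin N → Bool) × Bool) ≃ (Fin (N+1) → Bool) where
  toFun p := appd p.1 p.2
  invFun v := (restr v, v (Fin.last N))
  left_inv p := by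
    obtain ⟨u, b⟩ := p
    simp only [Prod.mk.injEq]
    constructor
    · funext i
      simp [restr, appd, i.2]
    · exact appd_last u b
  right_inv v := by
    funext i
    show appd (restr v) (v (Fin.last N)) i = v i
    by_cases h : i.1 < N
    · rw [appd_lt _ _ _ h]
      exact congrArg v (Fin.ext rfl)
    · have hi : i = Fin.last N := Fin.ext (by have := i.2; simp only [Fin.val_last]; omega)
      rw [hi]
      exact appd_last _ _

lemma sum_appd (F : (Fin (N+1) → Bool) → ℕ) :
    ∑ v : Fin (N+1) → Bool, F v
      = ∑ u : Fin N → Bool, (F (appd u false) + F (appd u true)) := by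
  rw [← Equiv.sum_comp (appdEquiv (N := N)) F]
  rw [Fintype.sum_prod_type]
  apply Finset.sum_congr rfl
  intro u _
  rw [Fintype.sum_bool]
  simp only [appdEquiv, Equiv.coe_fn_mk]
  omega

lemma extB_appd_lt (u : Fin N → Bool) (b : Bool) {j : ℕ} (h : j < N) :
    extB (appd u b) j = extB u j := by
  simp only [extB, appd]
  rw [dif_pos (by omega : j < N + 1), dif_pos h, dif_pos h]

lemma extB_appd_last (u : Fin N → Bool) (b : Bool) : extB (appd u b) N = b := by
  simp only [extB, appd]
  rw [dif_pos (by omega : N < N + 1)]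
  exact dif_neg (by omega)

lemma wseq_appd (u : Fin N → Bool) (b : Bool) {j : ℕ} (h : j < N) :
    wseq (extB (appd u b)) j = wseq (extB u) j :=
  wseq_congr j (fun k hk => extB_appd_lt u b (by omega))

lemma fib_appd_false (u : Fin N → Bool) :
    FibPred (N+1) (appd u false) ↔ FibPred N u := by
  constructor
  · intro h i j hij
    have := h ⟨i.1, by omega⟩ ⟨j.1, by omega⟩ hij
    rwa [appd_lt _ _ _ i.2, appd_lt _ _ _ j.2] at this
  · intro h i j hij hc
    by_cases hj : j.1 < N
    · have hi : i.1 < N := by omega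
      rw [appd_lt _ _ _ hi, appd_lt _ _ _ hj] at hc
      exact h ⟨i.1, hi⟩ ⟨j.1, hj⟩ hij hc
    · have : j = Fin.last N := Fin.ext (by simp [Fin.last]; omega)
      rw [this, appd_last] at hc
      exact Bool.false_ne_true hc.2

lemma fib_appd_true (u : Fin (n+1) → Bool) :
    FibPred (n+2) (appd u true) ↔ FibPred (n+1) u ∧ u (Fin.last n) = false := by
  constructor
  · intro h
    constructor
    · intro i j hij hc
      have := h ⟨i.1, by omega⟩ ⟨j.1, by omega⟩ hij
      rw [appd_lt u true ⟨i.1, by omega⟩ i.2, appd_lt u true ⟨j.1, by omega⟩ j.2] at this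
      exact this hc
    · by_contra hc
      have hc' : u (Fin.last n) = true := by
        cases h : u (Fin.last n)
        · exact absurd h hc
        · rfl
      apply h ⟨n, by omega⟩ ⟨n+1, by omega⟩ rfl
      constructor
      · rw [appd_lt _ _ _ (show n < n+1 by omega)]
        rw [show (⟨n, show n < n+1 by omega⟩ : Fin (n+1)) = Fin.last n from Fin.ext rfl]
        exact hc'
      · simp [appd]
  · rintro ⟨h, hl⟩ i j hij hc
    by_cases hj : j.1 < n+1
    · have hi : i.1 < n+1 := by omega
      rw [appd_lt _ _ _ hi, appd_lt _ _ _ hj] at hc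
      exact h ⟨i.1, hi⟩ ⟨j.1, hj⟩ hij hc
    · have hjv : j.1 = n + 1 := by omega
      have hiv : i.1 = n := by omega
      have hi : i.1 < n + 1 := by omega
      rw [appd_lt _ _ _ hi] at hc
      have : (⟨i.1, hi⟩ : Fin (n+1)) = Fin.last n := Fin.ext (by simp [Fin.last, hiv])
      rw [this, hl] at hc
      exact Bool.false_ne_true hc.1

lemma mfun_appd (u : Fin (n+1) → Bool) (b : Bool) :
    mfun (appd u b) = mfun u +
      (if b = false ∧ u (Fin.last n) = false ∧ wseq (extB u) n = true then 1 else 0) := by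
  unfold mfun mset
  rw [Finset.card_filter, Finset.card_filter, Fin.sum_univ_castSucc]
  congr 1
  · apply Finset.sum_congr rfl
    intro i _
    congr 1
    have hcv : (i.castSucc : ℕ) = i.1 := rfl
    have h1 : appd u b i.castSucc = u i := by
      rw [appd_lt _ _ _ (by rw [hcv]; exact i.2 : (i.castSucc : ℕ) < n+1)]
      exact congrArg u (Fin.ext rfl)
    have h2 : extB (appd u b) ((i.castSucc : ℕ) - 1) = extB u (i.1 - 1) := by
      rw [hcv, extB_appd_lt u b (by omega)]
    have h3 : wseq (extB (appd u b)) ((i.castSucc : ℕ) - 1) = wseq (extB u) (i.1 - 1) := by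
      rw [hcv, wseq_appd u b (by omega)]
    rw [h1, h2, h3, hcv]
  · have hlv : ((Fin.last (n+1) : Fin (n+2)) : ℕ) = n + 1 := rfl
    have h1 : appd u b (Fin.last (n+1)) = b := appd_last u b
    have h2 : extB (appd u b) (n + 1 - 1) = u (Fin.last n) := by
      rw [show n + 1 - 1 = n by omega, extB_appd_lt u b (by omega)]
      exact extB_lt u (Fin.last n)
    have h3 : wseq (extB (appd u b)) (n + 1 - 1) = wseq (extB u) n := by
      rw [show n + 1 - 1 = n by omega, wseq_appd u b (by omega)]
    rw [hlv, h1, h2, h3]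
    rcases b <;> rcases hu : u (Fin.last n) <;> rcases hw : wseq (extB u) n <;> simp

lemma wl_appd (u : Fin (n+1) → Bool) (b : Bool) :
    wseq (extB (appd u b)) (n+1) = (!b && (u (Fin.last n) || !wseq (extB u) n)) := by
  simp only [wseq]
  rw [extB_appd_last, wseq_appd u b (by omega), extB_appd_lt u b (by omega)]
  rw [show extB u n = u (Fin.last n) from extB_lt u (Fin.last n)]

end PartC
section PartC2

/-- Count of Fibonacci strings of length `n+1` ending in 1. -/
def cA (n : ℕ) : ℕ :=
  ∑ u : Fin (n+1) → Bool, if FibPred (n+1) u ∧ u (Fin.last n) = true then 1 else 0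

/-- Ending in 0 with odd final zero-run. -/
def cB (n : ℕ) : ℕ :=
  ∑ u : Fin (n+1) → Bool,
    if FibPred (n+1) u ∧ u (Fin.last n) = false ∧ wseq (extB u) n = true then 1 else 0

/-- Ending in 0 with even final zero-run. -/
def cC (n : ℕ) : ℕ :=
  ∑ u : Fin (n+1) → Bool,
    if FibPred (n+1) u ∧ u (Fin.last n) = false ∧ wseq (extB u) n = false then 1 else 0

def sA (n : ℕ) : ℕ :=
  ∑ u : Fin (n+1) → Bool, if FibPred (n+1) u ∧ u (Fin.last n) = true then mfun u else 0

def sB (n : ℕ) : ℕ :=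
  ∑ u : Fin (n+1) → Bool,
    if FibPred (n+1) u ∧ u (Fin.last n) = false ∧ wseq (extB u) n = true then mfun u else 0

def sC (n : ℕ) : ℕ :=
  ∑ u : Fin (n+1) → Bool,
    if FibPred (n+1) u ∧ u (Fin.last n) = false ∧ wseq (extB u) n = false then mfun u else 0

lemma rec_cA (n : ℕ) : cA (n+1) = cB n + cC n := by
  unfold cA cB cC
  rw [sum_appd, ← Finset.sum_add_distrib]
  apply Finset.sum_congr rfl
  intro u _
  by_cases hF : FibPred (n+1) u <;>
    rcases hl : u (Fin.last n) <;> rcases hw : wseq (extB u) n <;>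
      simp [appd_last, wl_appd, fib_appd_false, fib_appd_true, hF, hl, hw]

lemma rec_cB (n : ℕ) : cB (n+1) = cA n + cC n := by
  unfold cA cB cC
  rw [sum_appd, ← Finset.sum_add_distrib]
  apply Finset.sum_congr rfl
  intro u _
  by_cases hF : FibPred (n+1) u <;>
    rcases hl : u (Fin.last n) <;> rcases hw : wseq (extB u) n <;>
      simp [appd_last, wl_appd, fib_appd_false, fib_appd_true, hF, hl, hw]

lemma rec_cC (n : ℕ) : cC (n+1) = cB n := by
  unfold cB cC
  rw [sum_appd]
  apply Finset.sum_congr rfl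
  intro u _
  by_cases hF : FibPred (n+1) u <;>
    rcases hl : u (Fin.last n) <;> rcases hw : wseq (extB u) n <;>
      simp [appd_last, wl_appd, fib_appd_false, fib_appd_true, hF, hl, hw]

lemma rec_sA (n : ℕ) : sA (n+1) = sB n + sC n := by
  unfold sA sB sC
  rw [sum_appd, ← Finset.sum_add_distrib]
  apply Finset.sum_congr rfl
  intro u _
  by_cases hF : FibPred (n+1) u <;>
    rcases hl : u (Fin.last n) <;> rcases hw : wseq (extB u) n <;>
      simp [appd_last, wl_appd, fib_appd_false, fib_appd_true, mfun_appd, hF, hl, hw]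

lemma rec_sB (n : ℕ) : sB (n+1) = sA n + sC n := by
  unfold sA sB sC
  rw [sum_appd, ← Finset.sum_add_distrib]
  apply Finset.sum_congr rfl
  intro u _
  by_cases hF : FibPred (n+1) u <;>
    rcases hl : u (Fin.last n) <;> rcases hw : wseq (extB u) n <;>
      simp [appd_last, wl_appd, fib_appd_false, fib_appd_true, mfun_appd, hF, hl, hw]

lemma rec_sC (n : ℕ) : sC (n+1) = sB n + cB n := by
  unfold sB sC cB
  rw [sum_appd, ← Finset.sum_add_distrib]
  apply Finset.sum_congr rfl
  intro u _
  by_cases hF : FibPred (n+1) u <;>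
    rcases hl : u (Fin.last n) <;> rcases hw : wseq (extB u) n <;>
      simp [appd_last, wl_appd, fib_appd_false, fib_appd_true, mfun_appd, hF, hl, hw]

lemma base_c : cA 0 = 1 ∧ cB 0 = 1 ∧ cC 0 = 0 ∧ sA 0 = 0 ∧ sB 0 = 0 ∧ sC 0 = 0 := by
  decide

lemma closed_all (n : ℕ) : cA n = Nat.fib (n+1) ∧ cB n = Nat.fib (n+1) ∧ cC n = Nat.fib n ∧
    (5 * sA n + (n+1) * Nat.fib (n+2) + 2 * Nat.fib (n+1) = 3 * (n+1) * Nat.fib (n+1)) ∧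
    (5 * sB n + (n+1) * Nat.fib (n+2) + 2 * Nat.fib (n+1) = 3 * (n+1) * Nat.fib (n+1)) ∧
    (5 * sC n + 4 * (n+1) * Nat.fib (n+1) = Nat.fib (n+1) + 3 * (n+1) * Nat.fib (n+2)) := by
  induction n with
  | zero =>
    obtain ⟨h1, h2, h3, h4, h5, h6⟩ := base_c
    refine ⟨by simp [h1], by simp [h2], by simp [h3], ?_, ?_, ?_⟩ <;>
      simp [h4, h5, h6, Nat.fib_one, Nat.fib_two]
  | succ n ih =>
    obtain ⟨hA, hB, hC, hsA, hsB, hsC⟩ := ih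
    have hF : Nat.fib (n+3) = Nat.fib (n+1) + Nat.fib (n+2) := Nat.fib_add_two
    have hF2 : Nat.fib (n+2) = Nat.fib n + Nat.fib (n+1) := Nat.fib_add_two
    have e1 : n+1+1 = n+2 := rfl
    have e2 : n+1+2 = n+3 := rfl
    refine ⟨?_, ?_, ?_, ?_, ?_, ?_⟩
    · rw [rec_cA, hB, hC, e1]; omega
    · rw [rec_cB, hA, hC, e1]; omega
    · rw [rec_cC, hB]
    · rw [rec_sA, e1, e2]
      zify at hsB hsC ⊢
      have hFz : (Nat.fib (n+3) : ℤ) = Nat.fib (n+1) + Nat.fib (n+2) := by exact_mod_cast hF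
      push_cast
      linear_combination hsB + hsC + ((n : ℤ) + 2) * hFz
    · rw [rec_sB, e1, e2]
      zify at hsA hsC ⊢
      have hFz : (Nat.fib (n+3) : ℤ) = Nat.fib (n+1) + Nat.fib (n+2) := by exact_mod_cast hF
      push_cast
      linear_combination hsA + hsC + ((n : ℤ) + 2) * hFz
    · rw [rec_sC, hB, e1, e2]
      zify at hsB ⊢
      have hFz : (Nat.fib (n+3) : ℤ) = Nat.fib (n+1) + Nat.fib (n+2) := by exact_mod_cast hF
      push_cast
      linear_combination hsB + 5 * (0 : ℤ) - 3 * ((n : ℤ) + 2) * hFz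

lemma card_FibV (n : ℕ) : Fintype.card (FibV (n+1)) = Nat.fib (n+3) := by
  obtain ⟨hA, hB, hC, -, -, -⟩ := closed_all n
  have h1 : Fintype.card (FibV (n+1)) =
      ∑ u : Fin (n+1) → Bool, if FibPred (n+1) u then 1 else 0 := by
    unfold FibV
    rw [← Finset.card_filter]
    exact Fintype.card_subtype _
  rw [h1]
  have h2 : ∀ u : Fin (n+1) → Bool, (if FibPred (n+1) u then 1 else 0) =
      (if FibPred (n+1) u ∧ u (Fin.last n) = true then 1 else 0) +
      ((if FibPred (n+1) u ∧ u (Fin.last n) = false ∧ wseq (extB u) n = true then 1 else 0) +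
       (if FibPred (n+1) u ∧ u (Fin.last n) = false ∧ wseq (extB u) n = false then 1 else 0)) := by
    intro u
    by_cases hF : FibPred (n+1) u <;>
      rcases hl : u (Fin.last n) <;> rcases hw : wseq (extB u) n <;> simp [hF, hl, hw]
  rw [Finset.sum_congr rfl (fun u _ => h2 u), Finset.sum_add_distrib, Finset.sum_add_distrib]
  have : cA n + (cB n + cC n) = Nat.fib (n+3) := by
    rw [hA, hB, hC]
    have h3 : Nat.fib (n+3) = Nat.fib (n+1) + Nat.fib (n+2) := Nat.fib_add_two
    have h4 : Nat.fib (n+2) = Nat.fib n + Nat.fib (n+1) := Nat.fib_add_two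
    omega
  rw [← this]
  rfl

lemma sum_mfun_eq (n : ℕ) :
    5 * (∑ u : FibV (n+1), mfun u.1) + 3 * Nat.fib (n+1)
      = (n+1) * Nat.fib (n+2) + 2 * (n+1) * Nat.fib (n+1) := by
  obtain ⟨-, -, -, hsA, hsB, hsC⟩ := closed_all n
  have h1 : (∑ u : FibV (n+1), mfun u.1)
      = ∑ u : Fin (n+1) → Bool, if FibPred (n+1) u then mfun u else 0 := by
    rw [← Finset.sum_filter]
    exact (Finset.sum_subtype _ (by simp) mfun).symm
  have h2 : ∀ u : Fin (n+1) → Bool, (if FibPred (n+1) u then mfun u else 0) =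
      (if FibPred (n+1) u ∧ u (Fin.last n) = true then mfun u else 0) +
      ((if FibPred (n+1) u ∧ u (Fin.last n) = false ∧ wseq (extB u) n = true then mfun u else 0) +
       (if FibPred (n+1) u ∧ u (Fin.last n) = false ∧ wseq (extB u) n = false then mfun u else 0)) := by
    intro u
    by_cases hF : FibPred (n+1) u <;>
      rcases hl : u (Fin.last n) <;> rcases hw : wseq (extB u) n <;> simp [hF, hl, hw]
  have h3 : (∑ u : FibV (n+1), mfun u.1) = sA n + (sB n + sC n) := by
    rw [h1, Finset.sum_congr rfl (fun u _ => h2 u), Finset.sum_add_distrib,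
      Finset.sum_add_distrib]
    rfl
  rw [h3]
  zify at hsA hsB hsC ⊢
  push_cast
  linear_combination hsA + hsB + hsC

end PartC2
section PartD

open Real goldenRatio Filter

lemma sum_gecc_eq (n : ℕ) :
    (∑ u : FibV (n+1), gecc (fibCube (n+1)) u) + (∑ u : FibV (n+1), mfun u.1)
      = (n+1) * Nat.fib (n+3) := by
  rw [← Finset.sum_add_distrib]
  have h : ∀ u : FibV (n+1), gecc (fibCube (n+1)) u + mfun u.1 = n+1 := gecc_add_mfun
  rw [Finset.sum_congr rfl (fun u _ => h u), Finset.sum_const, Finset.card_univ, smul_eq_mul,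
    card_FibV n]
  ring

/-- Ratio of consecutive Fibonacci numbers. -/
noncomputable def fibRatio (k : ℕ) : ℝ := (Nat.fib k : ℝ) / (Nat.fib (k+1))

lemma fib_cast_pos (k : ℕ) (h : 0 < k) : (0:ℝ) < (Nat.fib k : ℝ) := by
  exact_mod_cast Nat.fib_pos.mpr h

lemma binet_denom (k : ℕ) : φ ^ (k+1) - ψ ^ (k+1) = Real.sqrt 5 * Nat.fib (k+1) := by
  rw [Real.coe_fib_eq (k+1)]
  have h5 : Real.sqrt 5 ≠ 0 := ne_of_gt (Real.sqrt_pos.mpr (by norm_num))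
  field_simp

lemma fibRatio_eq (k : ℕ) :
    fibRatio k = (1 - (ψ/φ)^k) / (φ - ψ * (ψ/φ)^k) := by
  have hφ : (0:ℝ) < φ := goldenRatio_pos
  have hφk : (0:ℝ) < φ ^ k := pow_pos hφ k
  have hfib : (0:ℝ) < (Nat.fib (k+1) : ℝ) := fib_cast_pos (k+1) (by omega)
  have h5 : (0:ℝ) < Real.sqrt 5 := Real.sqrt_pos.mpr (by norm_num)
  have hden2 : φ - ψ * (ψ/φ)^k = (Real.sqrt 5 * Nat.fib (k+1)) / φ^k := by
    rw [← binet_denom k]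
    rw [eq_div_iff (ne_of_gt hφk), div_pow, pow_succ, pow_succ]
    field_simp [ne_of_gt hφk]
  have hden2pos : (0:ℝ) < φ - ψ * (ψ/φ)^k := by
    rw [hden2]
    positivity
  rw [fibRatio, div_eq_div_iff (ne_of_gt hfib) (ne_of_gt hden2pos),
    Real.coe_fib_eq k, Real.coe_fib_eq (k+1)]
  have h5 : Real.sqrt 5 ≠ 0 := ne_of_gt (Real.sqrt_pos.mpr (by norm_num))
  have hφ0 := ne_of_gt hφ
  generalize φ = a at hφ0 ⊢
  generalize ψ = b
  rw [div_pow]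
  field_simp
  ring

lemma fibRatio_tendsto :
    Tendsto fibRatio atTop (nhds ((Real.sqrt 5 - 1)/2)) := by
  have hφ : (0:ℝ) < φ := goldenRatio_pos
  have h5 : (1:ℝ) < Real.sqrt 5 := by
    have : (1:ℝ) < 5 := by norm_num
    nlinarith [Real.sq_sqrt (show (0:ℝ) ≤ 5 by norm_num),
      Real.sqrt_nonneg (5:ℝ)]
  have habs : |ψ/φ| < 1 := by
    rw [abs_div, abs_of_pos hφ, div_lt_one hφ]
    rw [abs_of_neg goldenConj_neg]
    show -((1 - Real.sqrt 5)/2) < (1 + Real.sqrt 5)/2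
    linarith
  have hpow : Tendsto (fun k : ℕ => (ψ/φ)^k) atTop (nhds 0) :=
    tendsto_pow_atTop_nhds_zero_iff.mpr habs
  have hnum : Tendsto (fun k : ℕ => 1 - (ψ/φ)^k) atTop (nhds (1 - 0)) :=
    (tendsto_const_nhds).sub hpow
  have hden : Tendsto (fun k : ℕ => φ - ψ * (ψ/φ)^k) atTop (nhds (φ - ψ * 0)) :=
    (tendsto_const_nhds).sub ((tendsto_const_nhds).mul hpow)
  have hlim : Tendsto (fun k : ℕ => (1 - (ψ/φ)^k) / (φ - ψ * (ψ/φ)^k)) atTop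
      (nhds ((1 - 0)/(φ - ψ * 0))) :=
    hnum.div hden (by simpa using ne_of_gt hφ)
  have hval : (1 - 0 : ℝ)/(φ - ψ * 0) = (Real.sqrt 5 - 1)/2 := by
    have hs : Real.sqrt 5 ^ 2 = 5 := Real.sq_sqrt (by norm_num)
    have h15 : (0:ℝ) < 1 + Real.sqrt 5 := by positivity
    rw [mul_zero, sub_zero, sub_zero]
    rw [show (φ:ℝ) = (1 + Real.sqrt 5)/2 from rfl]
    field_simp
    first
      | linear_combination hs
      | linear_combination -hs
      | linear_combination (1/2:ℝ) * hs
      | linear_combination (-1/2:ℝ) * hs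
  rw [← hval]
  exact Tendsto.congr (fun k => (fibRatio_eq k).symm) hlim

end PartD

/-- The average eccentricity of Γ_n, divided by n, converges to (5+√5)/10. -/
theorem avg_ecc_fibCube_tendsto :
    Filter.Tendsto
      (fun n : ℕ =>
        ((∑ u : FibV n, gecc (fibCube n) u : ℕ) : ℝ) / (Fintype.card (FibV n)) / n)
      Filter.atTop (nhds ((5 + Real.sqrt 5) / 10)) := by
  classical
  have hg := fibRatio_tendsto
  set g : ℝ := (Real.sqrt 5 - 1)/2 with hgdef
  have h1 : Filter.Tendsto (fun n : ℕ => fibRatio (n+1)) Filter.atTop (nhds g) :=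
    hg.comp (Filter.tendsto_add_atTop_nat 1)
  have h3 : Filter.Tendsto (fun n : ℕ => 3/(5*(n:ℝ))) Filter.atTop (nhds 0) := by
    have h := tendsto_one_div_atTop_nhds_zero_nat.const_mul (3/5 : ℝ)
    rw [mul_zero] at h
    refine h.congr (fun n => ?_)
    ring
  have hmodel : Filter.Tendsto
      (fun n : ℕ => 1 - fibRatio (n+1)/5 - 2*(fibRatio n * fibRatio (n+1))/5
        + (3/(5*(n:ℝ)))*(fibRatio n * fibRatio (n+1))) Filter.atTop
      (nhds (1 - g/5 - 2*(g*g)/5 + 0*(g*g))) := by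
    refine Filter.Tendsto.add ?_ (h3.mul (hg.mul h1))
    exact (tendsto_const_nhds.sub (h1.div_const 5)).sub
      (((hg.mul h1).const_mul 2).div_const 5)
  have hval : (1 : ℝ) - g/5 - 2*(g*g)/5 + 0*(g*g) = (5 + Real.sqrt 5)/10 := by
    have hs : Real.sqrt 5 ^ 2 = 5 := Real.sq_sqrt (by norm_num)
    rw [hgdef]
    first
      | linear_combination hs
      | linear_combination -hs
      | linear_combination (1/10:ℝ) * hs
      | linear_combination (-1/10:ℝ) * hs
      | linear_combination (1/20:ℝ) * hs
      | linear_combination (-1/20:ℝ) * hs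
  rw [hval] at hmodel
  refine Filter.Tendsto.congr' ?_ hmodel
  rw [Filter.EventuallyEq, Filter.eventually_atTop]
  refine ⟨1, fun n hn => ?_⟩
  obtain ⟨k, rfl⟩ : ∃ k, n = k + 1 := ⟨n-1, by omega⟩
  have Hc := card_FibV k
  have Hg := sum_gecc_eq k
  have Hm := sum_mfun_eq k
  have hA : (0:ℝ) < (Nat.fib (k+1) : ℝ) := fib_cast_pos _ (by omega)
  have hB : (0:ℝ) < (Nat.fib (k+2) : ℝ) := fib_cast_pos _ (by omega)
  have hC : (0:ℝ) < (Nat.fib (k+3) : ℝ) := fib_cast_pos _ (by omega)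
  have hN : (0:ℝ) < (k:ℝ) + 1 := by positivity
  have HgR : ((∑ u : FibV (k+1), gecc (fibCube (k+1)) u : ℕ) : ℝ)
      + ((∑ u : FibV (k+1), mfun u.1 : ℕ) : ℝ) = ((k:ℝ)+1) * (Nat.fib (k+3) : ℝ) := by
    exact_mod_cast congrArg (Nat.cast : ℕ → ℝ) Hg
  have HmR : 5 * ((∑ u : FibV (k+1), mfun u.1 : ℕ) : ℝ) + 3 * (Nat.fib (k+1) : ℝ)
      = ((k:ℝ)+1) * (Nat.fib (k+2) : ℝ) + 2 * ((k:ℝ)+1) * (Nat.fib (k+1) : ℝ) := by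
    exact_mod_cast Hm
  have hS : ((∑ u : FibV (k+1), gecc (fibCube (k+1)) u : ℕ) : ℝ)
      = (5*(((k:ℝ)+1) * (Nat.fib (k+3) : ℝ)) - ((k:ℝ)+1) * (Nat.fib (k+2) : ℝ)
          - 2*(((k:ℝ)+1) * (Nat.fib (k+1) : ℝ)) + 3*(Nat.fib (k+1) : ℝ))/5 := by
    linear_combination HgR - (1/5) * HmR
  show (1:ℝ) - fibRatio (k+1+1)/5 - 2*(fibRatio (k+1) * fibRatio (k+1+1))/5
        + (3/(5*((k+1:ℕ):ℝ)))*(fibRatio (k+1) * fibRatio (k+1+1))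
      = _ / (Fintype.card (FibV (k+1))) / ((k+1:ℕ):ℝ)
  rw [Hc, hS]
  unfold fibRatio
  simp only [show k+1+1 = k+2 from rfl, show k+1+1+1 = k+3 from rfl,
    show k+2+1 = k+3 from rfl]
  push_cast
  field_simp
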